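/- If 0 ≤ r(x,u,w) and the initial function satisfies q̂_0^j(x,a) = 0 for all (x,a), then the AMAFQI sequence q̂_N^j is pointwise monotonically increasing in N: q̂_N^j(x,a) ≤ q̂_{N+1}^j(x,a) for all (x,a) ∈ X × A^j and all N ∈ ℕ. -/

import Mathlib

/-- Auxiliary AMAFQI function `q̃` built from a fitted function `q`. -/
noncomputable def qtil {X A U : Type*} {L : ℕ} [Fintype A] [Nonempty A]
    (Kbar : Fin L → X → U → ℝ) (rl : Fin L → ℝ) (β : ℝ) (xplus : Fin L → X)
    (q : X → A → ℝ) : X → U → ℝ :=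
  fun x u => ∑ l, Kbar l x u * (rl l + β * ⨆ a' : A, q (xplus l) a')

/-- AMAFQI iterates `q̂_N` for a single agent `j`, with `ulj l = u^l(j)`. -/
noncomputable def qhat {X A U : Type*} {L : ℕ} [Fintype A] [Nonempty A]
    (K : Fin L → X → A → ℝ) (Kbar : Fin L → X → U → ℝ)
    (xl : Fin L → X) (ul : Fin L → U) (ulj : Fin L → A)
    (xplus : Fin L → X) (rl : Fin L → ℝ) (β : ℝ) : ℕ → X → A → ℝ
  | 0 => fun _ _ => 0
  | N + 1 => fun x a => ∑ l, K l x a *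
      max (qhat K Kbar xl ul ulj xplus rl β N (xl l) (ulj l))
        (qtil Kbar rl β xplus (qhat K Kbar xl ul ulj xplus rl β N) (xl l) (ul l))

lemma qtil_mono {X A U : Type*} {L : ℕ} [Fintype A] [Nonempty A]
    (Kbar : Fin L → X → U → ℝ) (rl : Fin L → ℝ) (β : ℝ) (xplus : Fin L → X)
    (hβ0 : 0 ≤ β) (hKbar : ∀ l x u, 0 ≤ Kbar l x u)
    {q q' : X → A → ℝ} (h : ∀ x a, q x a ≤ q' x a) (x : X) (u : U) :
    qtil Kbar rl β xplus q x u ≤ qtil Kbar rl β xplus q' x u := by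
  unfold qtil
  apply Finset.sum_le_sum
  intro l _
  apply mul_le_mul_of_nonneg_left _ (hKbar l x u)
  apply add_le_add_right
  apply mul_le_mul_of_nonneg_left _ hβ0
  exact ciSup_mono (Set.Finite.bddAbove (Set.finite_range _)) (fun a => h _ a)

/-- Lemma 1: with nonnegative rewards and zero initialization, the AMAFQI iterates are
pointwise monotonically increasing in `N`. -/
theorem stmt2 {X A U : Type*} {L : ℕ} [Fintype A] [Nonempty A]
    (K : Fin L → X → A → ℝ) (Kbar : Fin L → X → U → ℝ)
    (xl : Fin L → X) (ul : Fin L → U) (ulj : Fin L → A)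
    (xplus : Fin L → X) (rl : Fin L → ℝ) (β : ℝ)
    (hβ0 : 0 ≤ β) (hβ1 : β < 1)
    (hK : ∀ l x a, 0 ≤ K l x a) (hKn : ∀ x a, ∑ l, K l x a = 1)
    (hKbar : ∀ l x u, 0 ≤ Kbar l x u) (hKbarn : ∀ x u, ∑ l, Kbar l x u = 1)
    (hr : ∀ l, 0 ≤ rl l) :
    ∀ (N : ℕ) (x : X) (a : A),
      qhat K Kbar xl ul ulj xplus rl β N x a ≤ qhat K Kbar xl ul ulj xplus rl β (N + 1) x a := by
  intro N
  induction N with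
  | zero =>
      intro x a
      show (0:ℝ) ≤ _
      apply Finset.sum_nonneg
      intro l _
      apply mul_nonneg (hK l x a)
      exact le_trans (le_refl 0) (le_max_left _ _)
  | succ N ih =>
      intro x a
      show ∑ l, _ ≤ ∑ l, _
      apply Finset.sum_le_sum
      intro l _
      apply mul_le_mul_of_nonneg_left _ (hK l x a)
      exact max_le_max (ih _ _) (qtil_mono Kbar rl β xplus hβ0 hKbar ih _ _)
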